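/- Let c be an extreme cycle in a graph E and H = \tilde{c}^0 = T(c^0). Then in the quotient graph construction _H E: (a) every vertex of _H E connects to a cycle, (b) every cycle in _H E has an exit, and (c) the only hereditary and saturated subsets of (_H E)^0 are ∅ and (_H E)^0. -/

import Mathlib

/-- A directed graph. -/
structure DGraph (V E : Type) where
  s : E → V
  r : E → V

namespace DGraph

variable {V E : Type}

/-- Paths in a directed graph. -/
inductive GPath (G : DGraph V E) : V → V → Type
  | nil (v : V) : GPath G v v
  | cons (e : E) {w : V} (p : GPath G (G.r e) w) : GPath G (G.s e) w

namespace GPath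

variable {G : DGraph V E}

/-- The length of a path. -/
def length : ∀ {u v : V}, GPath G u v → ℕ
  | _, _, .nil _ => 0
  | _, _, .cons _ p => p.length + 1

/-- The list of edges of a path. -/
def edges : ∀ {u v : V}, GPath G u v → List E
  | _, _, .nil _ => []
  | _, _, .cons e p => e :: p.edges

/-- The list of vertices of a path. -/
def vertices : ∀ {u v : V}, GPath G u v → List V
  | _, _, .nil w => [w]
  | _, _, .cons e p => G.s e :: p.vertices

end GPath

variable (G : DGraph V E)

/-- `u` connects to `v` (there is a path from `u` to `v`). -/
def Reach (u v : V) : Prop := Nonempty (G.GPath u v)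

/-- A subset of vertices is hereditary if it is closed under ranges of paths
starting in it. -/
def Hereditary (H : Set V) : Prop := ∀ ⦃u v : V⦄, G.Reach u v → u ∈ H → v ∈ H

/-- A regular vertex: it emits a finite nonzero number of edges. -/
def Regular (v : V) : Prop := {e : E | G.s e = v}.Finite ∧ ∃ e : E, G.s e = v

/-- The tower `Λ_m(H)` building the saturated closure: `Λ_0(H) = H` and
`Λ_{m+1}(H) = Λ_m(H) ∪ {v regular | r(s⁻¹(v)) ⊆ Λ_m(H)}`. -/
def Lam (H : Set V) : ℕ → Set V
  | 0 => H
  | m + 1 => Lam H m ∪ {v : V | G.Regular v ∧ ∀ e : E, G.s e = v → G.r e ∈ Lam H m}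

/-- The saturated closure of `H`: the union of the `Λ_m(H)`. -/
def satClosure (H : Set V) : Set V := ⋃ m : ℕ, G.Lam H m

/-- The tree of a set of vertices: all vertices reachable from it. -/
def Tree (X : Set V) : Set V := {w : V | ∃ v ∈ X, G.Reach v w}

/-- A set of vertices is saturated. -/
def Saturated (H : Set V) : Prop :=
  ∀ v : V, G.Regular v → (∀ e : E, G.s e = v → G.r e ∈ H) → v ∈ H

/-- A cycle based at `v`: a nontrivial closed path whose edges have pairwise
distinct sources. -/
def IsCycle {v : V} (p : G.GPath v v) : Prop :=
  0 < p.length ∧ (p.edges.map G.s).Nodup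

/-- An exit for a path: an edge starting at one of its vertices but not
belonging to the path. -/
def HasExit {u v : V} (p : G.GPath u v) : Prop :=
  ∃ e : E, G.s e ∈ p.edges.map G.s ∧ e ∉ p.edges

/-- An extreme cycle: a cycle with an exit such that every vertex reachable from
the cycle connects back to the cycle. -/
def IsExtreme {v : V} (p : G.GPath v v) : Prop :=
  G.IsCycle p ∧ G.HasExit p ∧
    ∀ w ∈ p.vertices, ∀ x : V, G.Reach w x → ∃ y ∈ p.vertices, G.Reach x y

/-- There is a bifurcation at `w`. -/
def Bifurcation (w : V) : Prop := ∃ e f : E, e ≠ f ∧ G.s e = w ∧ G.s f = w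

/-- `w` lies on a cycle. -/
def OnCycle (w : V) : Prop := ∃ p : G.GPath w w, G.IsCycle p

/-- A line point: no bifurcations and no cycles in its tree. -/
def IsLinePoint (v : V) : Prop :=
  ∀ w : V, G.Reach v w → ¬G.Bifurcation w ∧ ¬G.OnCycle w

/-- The set of line points `P_l`. -/
def Pl : Set V := {v : V | G.IsLinePoint v}

/-- The set `P_c` of vertices lying on cycles without exits. -/
def Pc : Set V :=
  {v : V | ∃ (u : V) (p : G.GPath u u), G.IsCycle p ∧ ¬G.HasExit p ∧ v ∈ p.vertices}

/-- The set `P_ec` of vertices lying on extreme cycles. -/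
def Pec : Set V :=
  {v : V | ∃ (u : V) (p : G.GPath u u), G.IsExtreme p ∧ v ∈ p.vertices}

/-- The relation `∼¹`: `u ∼¹ v` iff `u = v`, or one reaches the other with no
bifurcations in their trees, or both are reachable from a common vertex on a
cycle. -/
def SimOne (u v : V) : Prop :=
  u = v ∨
    ((G.Reach u v ∨ G.Reach v u) ∧
      ∀ w : V, (G.Reach u w ∨ G.Reach v w) → ¬G.Bifurcation w) ∨
    ∃ w : V, G.OnCycle w ∧ G.Reach w u ∧ G.Reach w v

/-- The relation `∼`: the transitive closure of `∼¹`. -/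
def Sim : V → V → Prop := Relation.TransGen G.SimOne

/-- The equivalence class `[u]` of a vertex under `∼`. -/
def classOf (u : V) : Set V := {v : V | G.Sim u v}

/-- The set `F_E(H)` of paths entering `H` minimally: all vertices but the last
one lie outside `H`, and the last one lies in `H`. -/
structure FEnter (G : DGraph V E) (H : Set V) where
  src : V
  tgt : V
  path : G.GPath src tgt
  length_pos : 0 < path.length
  tgt_mem : tgt ∈ H
  not_mem : ∀ w ∈ path.vertices.dropLast, w ∉ H

/-- The quotient graph `_H E` associated to a hereditary set `H`. -/
def quotGraph (H : Set V) (hH : ∀ e : E, G.s e ∈ H → G.r e ∈ H) :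
    DGraph (H ⊕ G.FEnter H) ({e : E // G.s e ∈ H} ⊕ G.FEnter H) where
  s := fun x => match x with
    | .inl e => .inl ⟨G.s e.1, e.2⟩
    | .inr α => .inr α
  r := fun x => match x with
    | .inl e => .inl ⟨G.r e.1, hH e.1 e.2⟩
    | .inr α => .inl ⟨α.tgt, α.tgt_mem⟩

end DGraph

section Aux

namespace DGraph

variable {V E : Type} {G : DGraph V E}

/-- Composition of paths. -/
def GPath.comp : ∀ {a b c : V}, G.GPath a b → G.GPath b c → G.GPath a c
  | _, _, _, .nil _, p => p
  | _, _, _, .cons e q, p => .cons e (q.comp p)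

theorem reach_trans {a b c : V} (h1 : G.Reach a b) (h2 : G.Reach b c) : G.Reach a c :=
  ⟨h1.some.comp h2.some⟩

theorem vertices_eq : ∀ {a b : V} (p : G.GPath a b), p.vertices = p.edges.map G.s ++ [b]
  | _, _, .nil _ => rfl
  | _, _, .cons e p => by simp [GPath.vertices, GPath.edges, vertices_eq p]

theorem start_mem_vertices : ∀ {a b : V} (p : G.GPath a b), a ∈ p.vertices
  | _, _, .nil _ => List.mem_singleton.2 rfl
  | _, _, .cons _ _ => List.mem_cons_self

theorem split_path : ∀ {a b : V} (p : G.GPath a b) {w : V}, w ∈ p.vertices →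
    G.Reach a w ∧ G.Reach w b
  | _, _, .nil v, w, hw => by
      simp [GPath.vertices] at hw; subst hw; exact ⟨⟨.nil _⟩, ⟨.nil _⟩⟩
  | _, _, .cons e p, w, hw => by
      rcases List.mem_cons.1 hw with h | h
      · subst h; exact ⟨⟨.nil _⟩, ⟨.cons e p⟩⟩
      · obtain ⟨h1, h2⟩ := split_path p h
        exact ⟨⟨.cons e h1.some⟩, h2⟩

theorem range_mem_vertices : ∀ {a b : V} (p : G.GPath a b) {f : E},
    f ∈ p.edges → G.r f ∈ p.vertices
  | _, _, .nil _, f, hf => by simp [GPath.edges] at hf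
  | _, _, .cons e p, f, hf => by
      rcases List.mem_cons.1 hf with h | h
      · subst h; exact List.mem_cons_of_mem _ (start_mem_vertices p)
      · exact List.mem_cons_of_mem _ (range_mem_vertices p h)

theorem start_mem_sources : ∀ {a b : V} (p : G.GPath a b),
    0 < p.length → a ∈ p.edges.map G.s
  | _, _, .nil _, h => by simp [GPath.length] at h
  | _, _, .cons e p, _ => by simp [GPath.edges]

variable {H : Set V}

theorem pathMem (hH : ∀ e : E, G.s e ∈ H → G.r e ∈ H) :
    ∀ {u z : V}, G.GPath u z → u ∈ H → z ∈ H
  | _, _, .nil _, h => h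
  | _, _, .cons e p, h => pathMem hH p (hH e h)

@[simp] theorem Qs_inl (hH : ∀ e : E, G.s e ∈ H → G.r e ∈ H)
    (e : {e : E // G.s e ∈ H}) :
    (G.quotGraph H hH).s (Sum.inl e) = Sum.inl ⟨G.s e.1, e.2⟩ := rfl

@[simp] theorem Qs_inr (hH : ∀ e : E, G.s e ∈ H → G.r e ∈ H) (α : G.FEnter H) :
    (G.quotGraph H hH).s (Sum.inr α) = Sum.inr α := rfl

@[simp] theorem Qr_inl (hH : ∀ e : E, G.s e ∈ H → G.r e ∈ H)
    (e : {e : E // G.s e ∈ H}) :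
    (G.quotGraph H hH).r (Sum.inl e) = Sum.inl ⟨G.r e.1, hH e.1 e.2⟩ := rfl

@[simp] theorem Qr_inr (hH : ∀ e : E, G.s e ∈ H → G.r e ∈ H) (α : G.FEnter H) :
    (G.quotGraph H hH).r (Sum.inr α) = Sum.inl ⟨α.tgt, α.tgt_mem⟩ := rfl

/-- Lift of a path starting in `H` to the quotient graph. -/
def liftPath (hH : ∀ e : E, G.s e ∈ H → G.r e ∈ H) :
    ∀ {u z : V} (q : G.GPath u z) (hu : u ∈ H),
      (G.quotGraph H hH).GPath (Sum.inl ⟨u, hu⟩) (Sum.inl ⟨z, pathMem hH q hu⟩)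
  | _, _, .nil w, hu => GPath.nil (Sum.inl (⟨w, hu⟩ : ↥H))
  | _, _, .cons e p, hu =>
      GPath.cons (Sum.inl (⟨e, hu⟩ : {e : E // G.s e ∈ H})) (liftPath hH p (hH e hu))

theorem liftPath_length (hH : ∀ e : E, G.s e ∈ H → G.r e ∈ H) :
    ∀ {u z : V} (q : G.GPath u z) (hu : u ∈ H),
      (liftPath hH q hu).length = q.length
  | _, _, .nil _, hu => rfl
  | _, _, .cons e p, hu => by
      simp [liftPath, GPath.length, liftPath_length hH p (hH e hu)]

/-- projection of quotient vertices to `V`. -/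
def toV : ↥H ⊕ G.FEnter H → V := Sum.elim Subtype.val (fun α => α.src)

theorem liftPath_sources (hH : ∀ e : E, G.s e ∈ H → G.r e ∈ H) :
    ∀ {u z : V} (q : G.GPath u z) (hu : u ∈ H),
      (liftPath hH q hu).edges.map (fun ε => toV ((G.quotGraph H hH).s ε))
        = q.edges.map G.s
  | _, _, .nil _, hu => rfl
  | _, _, .cons e p, hu => by
      simp only [liftPath, GPath.edges, List.map_cons,
        liftPath_sources hH p (hH e hu), Qs_inl]
      exact congrArg₂ List.cons rfl (liftPath_sources hH p (hH e hu))

theorem endInr (hH : ∀ e : E, G.s e ∈ H → G.r e ∈ H) :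
    ∀ {x y : ↥H ⊕ G.FEnter H} (p : (G.quotGraph H hH).GPath x y),
      (∃ α, y = Sum.inr α) → p.length = 0 ∧ x = y
  | _, _, .nil _, _ => ⟨rfl, rfl⟩
  | _, _, .cons ε p, hy => by
      obtain ⟨h0, heq⟩ := endInr hH p hy
      obtain ⟨α, rfl⟩ := hy
      exfalso
      cases ε with
      | inl e => rw [Qr_inl] at heq; simp at heq
      | inr β => rw [Qr_inr] at heq; simp at heq

theorem projPath (hH : ∀ e : E, G.s e ∈ H → G.r e ∈ H)
    {x y : ↥H ⊕ G.FEnter H} (p : (G.quotGraph H hH).GPath x y) :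
    ∀ {u : V} (hu : u ∈ H), x = Sum.inl ⟨u, hu⟩ →
    ∃ (z : V) (hz : z ∈ H) (q : G.GPath u z),
      y = Sum.inl ⟨z, hz⟩ ∧ q.length = p.length ∧
      p.edges.map (Sum.map Subtype.val id) = q.edges.map Sum.inl ∧
      p.edges.map (fun ε => toV ((G.quotGraph H hH).s ε)) = q.edges.map G.s := by
  induction p with
  | nil w =>
      intro u hu hx
      exact ⟨u, hu, .nil u, hx, rfl, rfl, rfl⟩
  | cons ε p' ih =>
      intro u hu hx
      cases ε with
      | inr α => rw [Qs_inr] at hx; simp at hx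
      | inl e =>
          obtain ⟨e, he⟩ := e
          rw [Qs_inl] at hx
          have hsu : G.s e = u := by
            simpa [Subtype.ext_iff] using hx
          obtain ⟨z, hz, q', hy, hlen, h1, h2⟩ := ih (hH e he) rfl
          subst hsu
          refine ⟨z, hz, .cons e q', hy, ?_, ?_, ?_⟩
          · simp [GPath.length, hlen]
          · simpa [GPath.edges] using h1
          · simpa [GPath.edges, toV] using h2

end DGraph

end Aux

/-- for an extreme cycle `c` and `H = T(c^0)`, in the quotient
graph `_H E`: (a) every vertex connects to a cycle, (b) every cycle has an
exit, (c) the only hereditary saturated subsets are `∅` and everything. -/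
theorem quotGraph_of_extreme_cycle {V E : Type} (G : DGraph V E) {v : V}
    (c : G.GPath v v) (hc : G.IsExtreme c) (H : Set V)
    (hHdef : H = G.Tree {x : V | x ∈ c.vertices})
    (hH : ∀ e : E, G.s e ∈ H → G.r e ∈ H) :
    (∀ x : ↥H ⊕ G.FEnter H, ∃ (w : ↥H ⊕ G.FEnter H)
        (p : (G.quotGraph H hH).GPath w w),
        (G.quotGraph H hH).IsCycle p ∧ (G.quotGraph H hH).Reach x w) ∧
    (∀ (w : ↥H ⊕ G.FEnter H) (p : (G.quotGraph H hH).GPath w w),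
        (G.quotGraph H hH).IsCycle p → (G.quotGraph H hH).HasExit p) ∧
    (∀ H' : Set (↥H ⊕ G.FEnter H), (G.quotGraph H hH).Hereditary H' →
        (G.quotGraph H hH).Saturated H' → H' = ∅ ∨ H' = Set.univ) := by
  classical
  obtain ⟨⟨hclen, hcnd⟩, hexit, hext⟩ := hc
  have hv : v ∈ H := by
    rw [hHdef]
    exact ⟨v, G.start_mem_vertices c, ⟨.nil v⟩⟩
  -- every vertex of H reaches v in E, and v reaches every vertex of H in E
  have reach_to_v : ∀ u : V, u ∈ H → G.Reach u v := by
    intro u hu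
    rw [hHdef] at hu
    obtain ⟨y₀, hy₀, hry₀⟩ := hu
    obtain ⟨y, hy, ruy⟩ := hext y₀ hy₀ u hry₀
    exact DGraph.reach_trans ruy (G.split_path c hy).2
  have reach_from_v : ∀ u : V, u ∈ H → G.Reach v u := by
    intro u hu
    rw [hHdef] at hu
    obtain ⟨y₀, hy₀, hry₀⟩ := hu
    exact DGraph.reach_trans (G.split_path c hy₀).1 hry₀
  -- reachability of inl v in the quotient graph
  have reachInl : ∀ (u : V) (hu : u ∈ H),
      (G.quotGraph H hH).Reach (Sum.inl ⟨u, hu⟩) (Sum.inl ⟨v, hv⟩) := by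
    intro u hu
    exact ⟨(DGraph.liftPath hH (reach_to_v u hu).some hu :
      (G.quotGraph H hH).GPath (Sum.inl ⟨u, hu⟩) (Sum.inl ⟨v, hv⟩))⟩
  have reachInl' : ∀ (u : V) (hu : u ∈ H),
      (G.quotGraph H hH).Reach (Sum.inl ⟨v, hv⟩) (Sum.inl ⟨u, hu⟩) := by
    intro u hu
    exact ⟨(DGraph.liftPath hH (reach_from_v u hu).some hv :
      (G.quotGraph H hH).GPath (Sum.inl ⟨v, hv⟩) (Sum.inl ⟨u, hu⟩))⟩
  have keyReach : ∀ x : ↥H ⊕ G.FEnter H,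
      (G.quotGraph H hH).Reach x (Sum.inl ⟨v, hv⟩) := by
    intro x
    cases x with
    | inl u => exact reachInl u.1 u.2
    | inr α =>
        exact DGraph.reach_trans
          ⟨.cons (Sum.inr α) (.nil _)⟩ (reachInl α.tgt α.tgt_mem)
  -- the lifted cycle
  have cycLift : (G.quotGraph H hH).IsCycle
      (DGraph.liftPath hH c hv :
        (G.quotGraph H hH).GPath (Sum.inl ⟨v, hv⟩) (Sum.inl ⟨v, hv⟩)) := by
    constructor
    · rw [DGraph.liftPath_length hH c hv]; exact hclen
    · have h2 := DGraph.liftPath_sources hH c hv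
      have h3 : ((DGraph.liftPath hH c hv).edges.map (G.quotGraph H hH).s).map
          DGraph.toV = c.edges.map G.s := by
        rw [List.map_map]; exact h2
      have h4 : (((DGraph.liftPath hH c hv).edges.map (G.quotGraph H hH).s).map
          DGraph.toV).Nodup := by rw [h3]; exact hcnd
      exact h4.of_map _
  refine ⟨?_, ?_, ?_⟩
  · -- (a)
    intro x
    exact ⟨Sum.inl ⟨v, hv⟩, _, cycLift, keyReach x⟩
  · -- (b)
    intro w p hp
    obtain ⟨hlen, hnd⟩ := hp
    by_contra hne
    -- the base vertex is an inl
    cases w with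
    | inr α =>
        have := (DGraph.endInr hH p ⟨α, rfl⟩).1
        omega
    | inl uu =>
        obtain ⟨u, hu⟩ := uu
        obtain ⟨z, hz, q, hy, hqlen, h1, h2⟩ := DGraph.projPath hH p hu rfl
        have hzu : z = u := by
          simpa [Subtype.ext_iff, eq_comm] using hy
        subst hzu
        -- now q : G.GPath z z, a closed path in E
        have hql : 0 < q.length := by rw [hqlen]; exact hlen
        have memH : ∀ w : V, w ∈ q.edges.map G.s → w ∈ H := by
          intro w hw
          have hwv : w ∈ q.vertices := by
            rw [DGraph.vertices_eq]; exact List.mem_append_left _ hw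
          exact DGraph.pathMem hH (G.split_path q hwv).1.some hz
        -- no exit forces all edges from sources of q to be in q
        have P1 : ∀ f : E, G.s f ∈ q.edges.map G.s →
            ∀ hf : G.s f ∈ H,
              ((Sum.inl (⟨f, hf⟩ : {e : E // G.s e ∈ H}) :
                  {e : E // G.s e ∈ H} ⊕ G.FEnter H) ∈ p.edges ∧ f ∈ q.edges) := by
          intro f hSf hf
          rw [← h2] at hSf
          obtain ⟨ε, hεmem, hεv⟩ := List.mem_map.1 hSf
          have hεinl : (Sum.map Subtype.val id ε : E ⊕ G.FEnter H)
              ∈ q.edges.map Sum.inl := by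
            rw [← h1]; exact List.mem_map_of_mem hεmem
          obtain ⟨e', he'q, he'eq⟩ := List.mem_map.1 hεinl
          cases ε with
          | inr β => simp at he'eq
          | inl ee =>
              have hse : G.s ee.1 = G.s f := by
                rw [DGraph.Qs_inl] at hεv
                simpa [DGraph.toV] using hεv
              have hsrc : (G.quotGraph H hH).s
                  (Sum.inl (⟨f, hf⟩ : {e : E // G.s e ∈ H}))
                  ∈ p.edges.map (G.quotGraph H hH).s := by
                have heq2 : (G.quotGraph H hH).s
                      (Sum.inl (⟨f, hf⟩ : {e : E // G.s e ∈ H}))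
                    = (G.quotGraph H hH).s (Sum.inl ee) := by
                  rw [DGraph.Qs_inl, DGraph.Qs_inl]
                  exact congrArg _ (Subtype.ext hse.symm)
                rw [heq2]
                exact List.mem_map_of_mem hεmem
              have hpf : (Sum.inl (⟨f, hf⟩ : {e : E // G.s e ∈ H}) :
                  {e : E // G.s e ∈ H} ⊕ G.FEnter H) ∈ p.edges := by
                by_contra hnf
                exact hne ⟨_, hsrc, hnf⟩
              refine ⟨hpf, ?_⟩
              have hmm : (Sum.map Subtype.val id
                    (Sum.inl (⟨f, hf⟩ : {e : E // G.s e ∈ H})) : E ⊕ G.FEnter H)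
                  ∈ q.edges.map Sum.inl := by
                rw [← h1]; exact List.mem_map_of_mem hpf
              obtain ⟨f', hf'q, hf'eq⟩ := List.mem_map.1 hmm
              have hff : f' = f := by simpa using hf'eq
              exact hff ▸ hf'q
        -- sources of q are closed under reachability
        have Sclosed : ∀ {a b : V} (ρ : G.GPath a b),
            a ∈ q.edges.map G.s → b ∈ q.edges.map G.s := by
          intro a b ρ
          induction ρ with
          | nil w => exact id
          | cons f ρ' ih =>
              intro hS
              have hfq := (P1 f hS (memH _ hS)).2
              have hrf : G.r f ∈ q.vertices := G.range_mem_vertices q hfq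
              rw [DGraph.vertices_eq] at hrf
              rcases List.mem_append.1 hrf with hsrc | hend
              · exact ih hsrc
              · have : G.r f = z := by simpa using hend
                exact ih (this ▸ G.start_mem_sources q hql)
        have uS : z ∈ q.edges.map G.s := G.start_mem_sources q hql
        -- bring in the exit of c
        obtain ⟨f, hfs, hfe⟩ := hexit
        obtain ⟨g, hgq, hgs⟩ := List.mem_map.1 hfs
        have hsfc : G.s f ∈ c.vertices := by
          rw [DGraph.vertices_eq]; exact List.mem_append_left _ hfs
        have rzsf : G.Reach z (G.s f) :=
          DGraph.reach_trans (reach_to_v z hz) (G.split_path c hsfc).1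
        have hSf : G.s f ∈ q.edges.map G.s := Sclosed rzsf.some uS
        have hSg : G.s g ∈ q.edges.map G.s := by rw [hgs]; exact hSf
        have hfH : G.s f ∈ H := memH _ hSf
        have hgH : G.s g ∈ H := memH _ hSg
        have hpf := (P1 f hSf hfH).1
        have hpg := (P1 g hSg hgH).1
        have hfg : f ≠ g := fun h => hfe (h ▸ hgq)
        have hsrceq : (G.quotGraph H hH).s
              (Sum.inl (⟨f, hfH⟩ : {e : E // G.s e ∈ H}))
            = (G.quotGraph H hH).s (Sum.inl (⟨g, hgH⟩ : {e : E // G.s e ∈ H})) := by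
          rw [DGraph.Qs_inl, DGraph.Qs_inl]
          exact congrArg _ (Subtype.ext hgs.symm)
        have := List.inj_on_of_nodup_map hnd hpf hpg hsrceq
        exact hfg (by simpa [Subtype.ext_iff] using this)
  · -- (c)
    intro H' hHer hSat
    rcases Set.eq_empty_or_nonempty H' with h | ⟨x, hx⟩
    · exact Or.inl h
    right
    have hvH' : Sum.inl ⟨v, hv⟩ ∈ H' := hHer (keyReach x) hx
    have hInl : ∀ (u : V) (hu : u ∈ H), Sum.inl ⟨u, hu⟩ ∈ H' := by
      intro u hu
      exact hHer (reachInl' u hu) hvH'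
    apply Set.eq_univ_of_forall
    intro w
    cases w with
    | inl u => exact hInl u.1 u.2
    | inr α =>
        apply hSat
        · constructor
          · apply Set.Finite.subset (Set.finite_singleton (Sum.inr α))
            intro ε hε
            cases ε with
            | inl e => rw [Set.mem_setOf_eq, DGraph.Qs_inl] at hε; simp at hε
            | inr β =>
                rw [Set.mem_setOf_eq, DGraph.Qs_inr] at hε
                simpa using hε
          · exact ⟨Sum.inr α, rfl⟩
        · intro ε hε
          cases ε with
          | inl e => rw [DGraph.Qs_inl] at hε; simp at hε
          | inr β =>
              rw [DGraph.Qr_inr]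
              exact hInl β.tgt β.tgt_mem
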